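/- arXiv:2010.08022 — 4 statements merged into one kernel-verified Lean document; each statement's English description precedes it below -/
import Mathlib

section
/- For lower-triangular L, the identity E·(I ⊗ L)·D·E = E·(I ⊗ L) holds, where E and D are the elimination and duplication matrices over index pairs i ≥ j. -/
open Matrix
open scoped Kronecker

/-- `vec` stacks the columns of a matrix: entry `(j, i)` is `A i j`. -/
def vecOp {n : ℕ} (A : Matrix (Fin n) (Fin n) ℝ) : Fin n × Fin n → ℝ :=
  fun p => A p.2 p.1
/-- Index pairs `(i, j)` with `j ≤ i`. -/
abbrev SymIdx (n : ℕ) := {p : Fin n × Fin n // p.2 ≤ p.1}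

/-- Elimination matrix: row `(i,j)` (with `j ≤ i`) is `vec(1_{ji})ᵀ`. -/
def elimMat (n : ℕ) : Matrix (SymIdx n) (Fin n × Fin n) ℝ :=
  fun r c => Matrix.single r.val.2 r.val.1 (1 : ℝ) c.2 c.1

/-- Duplication matrix: column `(k,ℓ)` (with `ℓ ≤ k`) is
`vec((1 - δ_{kℓ}) 1_{kℓ} + 1_{ℓk})`. -/
def dupMat (n : ℕ) : Matrix (Fin n × Fin n) (SymIdx n) ℝ :=
  fun r c =>
    ((if c.val.1 = c.val.2 then (0 : ℝ) else 1) • Matrix.single c.val.1 c.val.2 (1 : ℝ)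
      + Matrix.single c.val.2 c.val.1 (1 : ℝ)) r.2 r.1
lemma EM {n : ℕ} (L : Matrix (Fin n) (Fin n) ℝ) (r : {p : Fin n × Fin n // p.2 ≤ p.1}) (c : Fin n × Fin n) :
    (elimMat n * ((1 : Matrix (Fin n) (Fin n) ℝ) ⊗ₖ L)) r c
      = (if r.val.1 = c.1 then 1 else 0) * L r.val.2 c.2 := by
  simp [mul_apply, elimMat, Matrix.single, Matrix.one_apply,
    Fintype.sum_prod_type, ite_and, mul_ite]

lemma MD {n : ℕ} (L : Matrix (Fin n) (Fin n) ℝ) (r c : {p : Fin n × Fin n // p.2 ≤ p.1}) :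
    (elimMat n * ((1 : Matrix (Fin n) (Fin n) ℝ) ⊗ₖ L) * dupMat n) r c
      = (if c.val.1 = c.val.2 then 0 else 1) * (if c.val.2 = r.val.1 then 1 else 0) * L r.val.2 c.val.1
        + (if c.val.1 = r.val.1 then 1 else 0) * L r.val.2 c.val.2 := by
  rw [Matrix.mul_apply]
  simp only [EM]
  rcases eq_or_ne c.val.1 c.val.2 with h | h <;>
  simp [dupMat, h, Matrix.single, Fintype.sum_prod_type, ite_and, mul_ite, mul_add,
    Finset.sum_add_distrib, eq_comm, ite_apply, Matrix.of_apply]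

/-- For lower-triangular `L`, `E · (I ⊗ L) · D · E = E · (I ⊗ L)`. -/
theorem stmt11 {n : ℕ} (L : Matrix (Fin n) (Fin n) ℝ)
    (hL : ∀ i j, i < j → L i j = 0) :
    elimMat n * ((1 : Matrix (Fin n) (Fin n) ℝ) ⊗ₖ L) * dupMat n * elimMat n =
      elimMat n * ((1 : Matrix (Fin n) (Fin n) ℝ) ⊗ₖ L) := by
  ext r c
  rw [Matrix.mul_apply, EM]
  simp only [MD]
  obtain ⟨⟨i, j⟩, hij⟩ := r
  obtain ⟨a, b⟩ := c
  rcases le_or_gt b a with h | h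
  · rw [Finset.sum_eq_single (⟨(a, b), h⟩ : {p : Fin n × Fin n // p.2 ≤ p.1})]
    · simp only [elimMat, Matrix.single, Matrix.of_apply, ite_and, if_pos rfl, mul_one]
      rcases eq_or_ne a b with hab | hab
      · simp [hab, eq_comm]
      · rcases eq_or_ne b i with hbi | hbi
        · have : j < a := lt_of_le_of_lt (hbi ▸ hij) (lt_of_le_of_ne h (Ne.symm hab))
          simp [hbi, hab, hL j a this, eq_comm]
        · simp [hbi, hab, eq_comm]
    · rintro ⟨⟨k, l⟩, hkl⟩ - hne
      have : ¬(k = a ∧ l = b) := by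
        rintro ⟨rfl, rfl⟩; exact hne rfl
      simp only [elimMat, Matrix.single, ite_and]
      rcases eq_or_ne l b with rfl | hlb
      · rcases eq_or_ne k a with rfl | hka
        · exact absurd ⟨rfl, rfl⟩ this
        · simp [hka]
      · simp [hlb]
    · exact fun hmem => absurd (Finset.mem_univ _) hmem
  · rw [Finset.sum_eq_zero, eq_comm]
    · rcases eq_or_ne i a with rfl | hia
      · simp [hL j b (lt_of_le_of_lt hij h)]
      · simp [hia]
    · rintro ⟨⟨k, l⟩, hkl⟩ -
      have : ¬(l = b) ∨ ¬(k = a) := by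
        by_contra hc; push_neg at hc
        obtain ⟨rfl, rfl⟩ := hc
        exact absurd hkl (not_le.mpr h)
      simp only [elimMat, Matrix.single, ite_and]
      rcases this with h1 | h1
      · simp [h1]
      · rcases eq_or_ne l b with rfl | h2
        · simp [h1]
        · simp [h2]
end

section
/- For an invertible lower-triangular n×n matrix L, (E·(I ⊗ L)·D)⁻¹ = E·(I ⊗ L⁻¹)·D, where E and D are the elimination and duplication matrices. -/
open Matrix
open scoped Kronecker

lemma key {n : ℕ} (A : Matrix (Fin n) (Fin n) ℝ) (hA : ∀ i j, i < j → A i j = 0)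
    (r c : SymIdx n) :
    (elimMat n * ((1 : Matrix (Fin n) (Fin n) ℝ) ⊗ₖ A) * dupMat n) r c =
      if r.val.1 = c.val.1 then A r.val.2 c.val.2 else 0 := by
  obtain ⟨⟨i, j⟩, hji⟩ := r
  obtain ⟨⟨k, l⟩, hlk⟩ := c
  have hE : ∀ p : Fin n × Fin n, elimMat n ⟨(i,j), hji⟩ p = if p = (i, j) then 1 else 0 := by
    rintro ⟨a, b⟩
    by_cases h1 : a = i <;> by_cases h2 : b = j <;>
      simp [elimMat, Matrix.single, Prod.ext_iff, h1, h2, eq_comm, and_comm]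
  have hD : ∀ p : Fin n × Fin n, dupMat n p ⟨(k,l), hlk⟩ =
      (if k = l then (0:ℝ) else 1) * (if p = (l, k) then 1 else 0)
        + (if p = (k, l) then 1 else 0) := by
    rintro ⟨a, b⟩
    by_cases h1 : a = l <;> by_cases h2 : b = k <;> by_cases h3 : a = k <;> by_cases h4 : b = l <;> by_cases h5 : k = l <;>
      simp_all [dupMat, Matrix.single, Prod.ext_iff, eq_comm]
  rw [Matrix.mul_apply]
  have step : ∀ p : Fin n × Fin n,
      (elimMat n * ((1 : Matrix (Fin n) (Fin n) ℝ) ⊗ₖ A)) ⟨(i,j), hji⟩ p =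
        (if i = p.1 then 1 else 0) * A j p.2 := by
    rintro ⟨a, b⟩
    rw [Matrix.mul_apply]
    simp only [hE, ite_mul, one_mul, zero_mul]
    rw [Finset.sum_ite_eq']
    simp [Matrix.kroneckerMap_apply, Matrix.one_apply]
  simp only [step, hD]
  have expand : ∀ p : Fin n × Fin n,
      (if i = p.1 then (1:ℝ) else 0) * A j p.2 *
        ((if k = l then (0:ℝ) else 1) * (if p = (l, k) then 1 else 0)
          + (if p = (k, l) then 1 else 0)) =
      (if k = l then (0:ℝ) else 1) * ((if i = p.1 then (1:ℝ) else 0) * A j p.2 * (if p = (l, k) then 1 else 0))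
        + (if i = p.1 then (1:ℝ) else 0) * A j p.2 * (if p = (k, l) then 1 else 0) := by
    intro p; ring
  simp only [expand]
  rw [Finset.sum_add_distrib, ← Finset.mul_sum]
  simp only [mul_ite, mul_one, mul_zero, Finset.sum_ite_eq' Finset.univ]
  simp only [Finset.mem_univ, if_true]
  rcases eq_or_ne k l with h | h
  · simp only [h, if_pos rfl, zero_mul, zero_add]
    split <;> simp_all
  · rcases eq_or_ne i l with h2 | h2
    · have hjk : j < k := lt_of_le_of_lt (hji.trans_eq h2) (lt_of_le_of_ne hlk (Ne.symm h))
      have hik : i ≠ k := fun hik => h (hik.symm.trans h2)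
      simp [h, h2, hA j k hjk, hik]
    · simp only [if_neg h, one_mul, if_neg h2, zero_mul, zero_add]
      split <;> simp_all

lemma prodkey {n : ℕ} (A B : Matrix (Fin n) (Fin n) ℝ)
    (hA : ∀ i j, i < j → A i j = 0) (hB : ∀ i j, i < j → B i j = 0) :
    (elimMat n * ((1 : Matrix (Fin n) (Fin n) ℝ) ⊗ₖ A) * dupMat n) *
      (elimMat n * ((1 : Matrix (Fin n) (Fin n) ℝ) ⊗ₖ B) * dupMat n) =
    elimMat n * ((1 : Matrix (Fin n) (Fin n) ℝ) ⊗ₖ (A * B)) * dupMat n := by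
  have hAB : ∀ i j, i < j → (A * B) i j = 0 := by
    intro i j hij
    rw [Matrix.mul_apply]
    apply Finset.sum_eq_zero
    intro q _
    rcases le_or_gt q i with h | h
    · rw [hB q j (lt_of_le_of_lt h hij), mul_zero]
    · rw [hA i q h, zero_mul]
  ext r c
  rw [Matrix.mul_apply, key (A * B) hAB]
  simp only [key A hA, key B hB]
  obtain ⟨⟨i, j⟩, hji⟩ := r
  obtain ⟨⟨k, l⟩, hlk⟩ := c
  simp only
  rw [← Finset.sum_subtype (Finset.univ.filter fun p : Fin n × Fin n => p.2 ≤ p.1)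
      (fun x => by simp) (fun x : Fin n × Fin n =>
        (if i = x.1 then A j x.2 else 0) * (if x.1 = k then B x.2 l else 0))]
  rw [Finset.sum_filter, Fintype.sum_prod_type]
  rcases eq_or_ne i k with h | h
  · subst h
    rw [Finset.sum_eq_single i]
    · rw [if_pos rfl, Matrix.mul_apply]
      simp only [if_pos rfl, eq_self_iff_true, if_true]
      apply Finset.sum_congr rfl
      intro b _
      rcases le_or_gt b i with hb | hb
      · simp [hb]
      · rw [if_neg (not_le.mpr hb), hA j b (lt_of_le_of_lt hji hb), zero_mul]
    · intro a _ ha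
      apply Finset.sum_eq_zero
      intro b _
      rw [if_neg (Ne.symm ha)]
      simp
    · simp
  · rw [if_neg h]
    apply Finset.sum_eq_zero
    intro a _
    apply Finset.sum_eq_zero
    intro b _
    rcases eq_or_ne i a with rfl | ha
    · rw [if_neg h]; simp
    · rw [if_neg ha]; simp

lemma idkey {n : ℕ} :
    elimMat n * ((1 : Matrix (Fin n) (Fin n) ℝ) ⊗ₖ (1 : Matrix (Fin n) (Fin n) ℝ)) * dupMat n
      = 1 := by
  ext r c
  rw [key 1 (fun i j hij => Matrix.one_apply_ne (ne_of_lt hij))]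
  obtain ⟨⟨i, j⟩, hji⟩ := r
  obtain ⟨⟨k, l⟩, hlk⟩ := c
  simp only [Matrix.one_apply]
  by_cases h1 : i = k <;> by_cases h2 : j = l <;>
    simp [h1, h2, Subtype.ext_iff, Prod.ext_iff]

/-- For an invertible lower-triangular `L`, `(E · (I ⊗ L) · D)⁻¹ = E · (I ⊗ L⁻¹) · D`. -/
theorem stmt12 {n : ℕ} (L : Matrix (Fin n) (Fin n) ℝ)
    (hL : ∀ i j, i < j → L i j = 0) (hinv : IsUnit L.det) :
    (elimMat n * ((1 : Matrix (Fin n) (Fin n) ℝ) ⊗ₖ L) * dupMat n)⁻¹ =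
      elimMat n * ((1 : Matrix (Fin n) (Fin n) ℝ) ⊗ₖ L⁻¹) * dupMat n := by
  have : Invertible L := L.invertibleOfIsUnitDet hinv
  have hbt : L.BlockTriangular OrderDual.toDual := fun i j h => hL i j h
  have hL' : ∀ i j : Fin n, i < j → L⁻¹ i j = 0 := fun i j h =>
    Matrix.blockTriangular_inv_of_blockTriangular hbt h
  apply Matrix.inv_eq_right_inv
  rw [prodkey L L⁻¹ hL hL', Matrix.mul_nonsing_inv L hinv, idkey]
end

section
/- Let C = E·(I ⊗ Lᵀ)·D with L lower unitriangular. Then the entry of C in row indexed (i,j) and column indexed (k,ℓ) (with j ≤ i, ℓ ≤ k) equals L_{ℓj} if i = k, equals L_{kj} if i = ℓ (and i ≠ k), and equals 0 otherwise. More precisely, C_{ij,kℓ} = L_{kj}(1−δ_{kℓ})δ_{iℓ} + L_{ℓj}δ_{ik}. -/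
open Matrix
open scoped Kronecker

/-- Entries of `C = E · (I ⊗ Lᵀ) · D` for `L` lower unitriangular:
`C_{ij,kℓ} = L_{kj}(1 − δ_{kℓ})δ_{iℓ} + L_{ℓj}δ_{ik}`. -/
theorem stmt13 {n : ℕ} (L : Matrix (Fin n) (Fin n) ℝ)
    (hL : ∀ i j, i < j → L i j = 0) (hdiag : ∀ i, L i i = 1)
    (i j k l : Fin n) (hij : j ≤ i) (hkl : l ≤ k) :
    (elimMat n * ((1 : Matrix (Fin n) (Fin n) ℝ) ⊗ₖ Lᵀ) * dupMat n)
        ⟨(i, j), hij⟩ ⟨(k, l), hkl⟩ =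
      L k j * (if k = l then 0 else 1) * (if i = l then 1 else 0)
        + L l j * (if i = k then 1 else 0) := by
  have h1 : ∀ (M : Matrix (Fin n × Fin n) (SymIdx n) ℝ) (c : SymIdx n),
      (elimMat n * M) ⟨(i,j), hij⟩ c = M (i, j) c := by
    intro M c
    simp [Matrix.mul_apply, elimMat, Matrix.single, Fintype.sum_prod_type,
      ite_and, Matrix.of_apply, Finset.sum_ite_eq, Finset.sum_ite_eq']
  rw [Matrix.mul_assoc, h1]
  simp only [Matrix.mul_apply, dupMat, Matrix.kroneckerMap_apply, Matrix.transpose_apply,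
    Matrix.one_apply, Matrix.single, Matrix.add_apply, Matrix.smul_apply,
    smul_eq_mul, Matrix.of_apply, Fintype.sum_prod_type, ite_and, mul_add,
    Finset.sum_add_distrib, mul_ite, mul_one, mul_zero, ite_mul, zero_mul, one_mul,
    Finset.sum_ite_eq, Finset.sum_ite_eq', Finset.mem_univ, if_true]
  by_cases h1 : i = k <;> by_cases h2 : i = l <;> by_cases h3 : k = l <;>
    simp_all [eq_comm] <;> ring
end

section
/- Closure of 𝓛 (Takahashi et al.): Let L be lower unitriangular with support contained in a set 𝓛 ⊆ {(i,j) : j ≤ i} that contains all diagonal pairs and satisfies the four-corners property: (i,j),(k,j) ∈ 𝓛 with i < k implies (k,i) ∈ 𝓛. Let C = E·(I ⊗ Lᵀ)·D, whose entries satisfy C_{ij,kℓ} = L_{ℓj} if i = k, L_{kj} if i = ℓ ≠ k, and 0 otherwise. Then for any (i,j) ∈ 𝓛 and (k,ℓ) with ℓ < k ≤ n and (k,ℓ) ∉ 𝓛, we have C_{ij,kℓ} = 0. -/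
open Matrix

/-- Closure of `𝓛` (Takahashi et al.): if `(i,j) ∈ 𝓛` and `(k,ℓ) ∉ 𝓛` with `ℓ < k`,
then `C_{ij,kℓ} = L_{kj}(1 − δ_{kℓ})δ_{iℓ} + L_{ℓj}δ_{ik} = 0`. -/
theorem stmt16 {n : ℕ} (L : Matrix (Fin n) (Fin n) ℝ)
    (hLlow : ∀ i j, i < j → L i j = 0) (hLdiag : ∀ i, L i i = 1)
    (𝓛 : Set (Fin n × Fin n))
    (hdiag : ∀ i : Fin n, (i, i) ∈ 𝓛)
    (hclosed : ∀ i j k : Fin n, (i, j) ∈ 𝓛 → (k, j) ∈ 𝓛 → i < k → (k, i) ∈ 𝓛)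
    (hsupp : ∀ a b : Fin n, b < a → (a, b) ∉ 𝓛 → L a b = 0)
    (i j k l : Fin n) (hij : j ≤ i) (hkl : l ≤ k)
    (hmem : (i, j) ∈ 𝓛) (hlk : l < k) (hnot : (k, l) ∉ 𝓛) :
    L k j * (if k = l then 0 else 1) * (if i = l then 1 else 0)
      + L l j * (if i = k then 1 else 0) = 0 := by
  have hLkj : L k j = 0 ∨ i ≠ l := by
    by_cases hil : i = l
    · left
      rcases lt_trichotomy j k with h | h | h
      · by_cases hm : (k, j) ∈ 𝓛
        · exact absurd (hil ▸ hclosed i j k hmem hm (hil ▸ hlk)) hnot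
        · exact hsupp k j h hm
      · exfalso
        rw [hil] at hij; rw [← h] at hlk
        exact absurd hij (not_le.mpr hlk)
      · exact hLlow k j h
    · exact Or.inr hil
  have hLlj : L l j = 0 ∨ i ≠ k := by
    by_cases hik : i = k
    · left
      rcases lt_trichotomy j l with h | h | h
      · by_cases hm : (l, j) ∈ 𝓛
        · exact absurd (hclosed l j k hm (hik ▸ hmem) hlk) hnot
        · exact hsupp l j h hm
      · exact (hnot (h ▸ hik ▸ hmem)).elim
      · exact hLlow l j h
    · exact Or.inr hik
  rcases hLkj with h1 | h1 <;> rcases hLlj with h2 | h2 <;>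
    simp [h1, h2]
end
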